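/- The global parametrix P^{(∞)}(z) = ∏_{k=0}^{n−1} ((z−r_{k+1})/(z−r_k))^{−ln(1−γ_k)/(2πi) · σ₃} z^{−βσ₃} satisfies, for x ∈ (r_j, r_{j+1}) with 0 < r_j (i.e. on the positive real axis away from division points), the jump relation P^{(∞)}_+(x) = P^{(∞)}_−(x) · diag((1−γ_j)^{−1}, 1−γ_j), where P^{(∞)}_± denote boundary values from the upper/lower half-plane. -/

import Mathlib

open Complex Filter Matrix

/-- The power z^c with the branch of the argument chosen in (−π/2, 3π/2]. -/
noncomputable def branchPow (z c : ℂ) : ℂ :=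
  Complex.exp (c * (Complex.log (z * Complex.exp (-(Real.pi * Complex.I) / 2))
    + Real.pi * Complex.I / 2))

private lemma tendsto_diag2 {α : Type*} {l : Filter α} {f g : α → ℂ} {F G : ℂ}
    (hf : Tendsto f l (nhds F)) (hg : Tendsto g l (nhds G)) :
    Tendsto (fun a => Matrix.diagonal ![f a, g a]) l (nhds (Matrix.diagonal ![F, G])) := by
  have hc : Continuous (fun p : ℂ × ℂ => (Matrix.diagonal ![p.1, p.2] : Matrix (Fin 2) (Fin 2) ℂ)) := by
    apply continuous_matrix
    intro i k
    fin_cases i <;> fin_cases k <;> simp [Matrix.diagonal_apply] <;> fun_prop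
  exact (hc.tendsto (F, G)).comp (hf.prodMk_nhds hg)

private lemma zpath_tendsto (x s : ℝ) :
    Tendsto (fun ε : ℝ => (x:ℂ) + (s:ℂ)*ε*Complex.I) (nhdsWithin 0 (Set.Ioi 0)) (nhds (x:ℂ)) := by
  have hc : Continuous fun ε : ℝ => (x:ℂ) + (s:ℂ)*ε*Complex.I := by fun_prop
  have h0 := hc.tendsto 0
  simp only [Complex.ofReal_zero, mul_zero, zero_mul, add_zero] at h0
  exact h0.mono_left nhdsWithin_le_nhds

private lemma branchPow_tendsto (x : ℝ) (hx : 0 < x) (c : ℂ) (s : ℝ) :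
    Tendsto (fun ε : ℝ => branchPow ((x:ℂ) + (s:ℂ)*ε*Complex.I) c)
      (nhdsWithin 0 (Set.Ioi 0)) (nhds (branchPow (x:ℂ) c)) := by
  have hexp : Complex.exp (-(Real.pi * Complex.I)/2) = -Complex.I := by
    have h : (-(↑Real.pi * Complex.I)/2) = ((-(Real.pi/2) : ℝ) : ℂ) * Complex.I := by push_cast; ring
    rw [h, Complex.exp_mul_I]
    simp [← Complex.ofReal_cos, ← Complex.ofReal_sin, Real.cos_pi_div_two, Real.sin_pi_div_two]
  have hc : ContinuousAt (fun z : ℂ => branchPow z c) (x:ℂ) := by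
    unfold branchPow
    apply Complex.continuous_exp.continuousAt.comp
    apply ContinuousAt.mul continuousAt_const
    apply ContinuousAt.add _ continuousAt_const
    apply ContinuousAt.clog (by fun_prop)
    rw [hexp, Complex.mem_slitPlane_iff]
    right
    simp [hx.ne']
  exact (hc.tendsto).comp (zpath_tendsto x s)

private lemma factor_cont (x p q : ℝ) (hpos : 0 < (x - q) / (x - p)) (a : ℂ) (s : ℝ) :
    Tendsto (fun ε : ℝ => (((x:ℂ) + (s:ℂ)*ε*Complex.I - q) / ((x:ℂ) + (s:ℂ)*ε*Complex.I - p)) ^ a)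
      (nhdsWithin 0 (Set.Ioi 0)) (nhds ((((x:ℂ) - q) / ((x:ℂ) - p)) ^ a)) := by
  have hxp : x ≠ p := by rintro rfl; simp at hpos
  have hden : (x:ℂ) - (p:ℂ) ≠ 0 := by rw [sub_ne_zero]; exact_mod_cast hxp
  have hb : Tendsto (fun ε : ℝ => ((x:ℂ) + (s:ℂ)*ε*Complex.I - q) / ((x:ℂ) + (s:ℂ)*ε*Complex.I - p))
      (nhdsWithin 0 (Set.Ioi 0)) (nhds (((x:ℂ) - q) / ((x:ℂ) - p))) :=
    Tendsto.div ((zpath_tendsto x s).sub tendsto_const_nhds)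
      ((zpath_tendsto x s).sub tendsto_const_nhds) hden
  have hslit : ((x:ℂ) - q) / ((x:ℂ) - p) ∈ Complex.slitPlane := by
    rw [Complex.mem_slitPlane_iff]
    left
    have h : (((x:ℂ) - q) / ((x:ℂ) - p)) = (((x - q)/(x - p) : ℝ) : ℂ) := by push_cast; ring
    rw [h, Complex.ofReal_re]
    exact hpos
  exact hb.cpow tendsto_const_nhds hslit

private lemma factor_jump (x p q : ℝ) (hq : x < q) (hp : p < x) (a : ℂ) (s : ℝ)
    (hs : s = 1 ∨ s = -1) :
    Tendsto (fun ε : ℝ => (((x:ℂ) + (s:ℂ)*ε*Complex.I - q) / ((x:ℂ) + (s:ℂ)*ε*Complex.I - p)) ^ a)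
      (nhdsWithin 0 (Set.Ioi 0))
      (nhds (Complex.exp ((Real.log (‖((x:ℂ) - q) / ((x:ℂ) - p)‖)
        + (s:ℂ) * (Real.pi * Complex.I)) * a))) := by
  set b : ℝ → ℂ := fun ε => ((x:ℂ) + (s:ℂ)*ε*Complex.I - q) / ((x:ℂ) + (s:ℂ)*ε*Complex.I - p) with hbdef
  set zj : ℂ := ((x:ℂ) - q) / ((x:ℂ) - p) with hzjdef
  have hden0 : (x:ℂ) - (p:ℂ) ≠ 0 := by
    rw [sub_ne_zero]; exact_mod_cast (hp.ne')
  have hb : Tendsto b (nhdsWithin 0 (Set.Ioi 0)) (nhds zj) :=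
    Tendsto.div ((zpath_tendsto x s).sub tendsto_const_nhds)
      ((zpath_tendsto x s).sub tendsto_const_nhds) hden0
  have hdenne : ∀ ε : ℝ, ((x:ℂ) + (s:ℂ)*ε*Complex.I - p) ≠ 0 := by
    intro ε h
    have := congrArg Complex.re h
    simp [Complex.add_re, Complex.sub_re, Complex.mul_re] at this
    linarith
  have himeq : ∀ ε : ℝ, (b ε).im
      = s * ε * (q - p) / Complex.normSq ((x:ℂ) + (s:ℂ)*ε*Complex.I - p) := by
    intro ε
    rw [hbdef]
    simp only [Complex.div_im]
    simp [Complex.add_re, Complex.sub_re, Complex.add_im, Complex.sub_im, Complex.mul_re,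
      Complex.mul_im]
    rw [div_sub_div_same]
    ring_nf
  have hQpos : ∀ ε : ℝ, 0 < Complex.normSq ((x:ℂ) + (s:ℂ)*ε*Complex.I - p) := fun ε =>
    Complex.normSq_pos.mpr (hdenne ε)
  have hzjre : zj.re < 0 := by
    have h : zj = (((x - q)/(x - p) : ℝ) : ℂ) := by rw [hzjdef]; push_cast; ring
    rw [h, Complex.ofReal_re]
    exact div_neg_of_neg_of_pos (by linarith) (by linarith)
  have hzjim : zj.im = 0 := by
    have h : zj = (((x - q)/(x - p) : ℝ) : ℂ) := by rw [hzjdef]; push_cast; ring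
    rw [h, Complex.ofReal_im]
  have hbne : ∀ ε ∈ Set.Ioi (0:ℝ), b ε ≠ 0 := by
    intro ε hε h0
    have h1 := himeq ε
    rw [h0] at h1
    simp only [Complex.zero_im] at h1
    have hqpos := hQpos ε
    have hε' : (0:ℝ) < ε := hε
    rcases hs with rfl | rfl
    · have : 0 < (1:ℝ) * ε * (q - p) / Complex.normSq ((x:ℂ) + ((1:ℝ):ℂ)*ε*Complex.I - p) := by
        apply div_pos (by nlinarith) hqpos
      rw [← h1] at this; exact lt_irrefl _ this
    · have : ((-1:ℝ)) * ε * (q - p) / Complex.normSq ((x:ℂ) + ((-1:ℝ):ℂ)*ε*Complex.I - p) < 0 := by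
        apply div_neg_of_neg_of_pos (by nlinarith) hqpos
      rw [← h1] at this; exact lt_irrefl _ this
  have key : ∀ (S : Set ℂ) (L : ℂ),
      Tendsto Complex.log (nhdsWithin zj S) (nhds L) →
      (∀ ε ∈ Set.Ioi (0:ℝ), b ε ∈ S) →
      Tendsto (fun ε : ℝ => b ε ^ a) (nhdsWithin 0 (Set.Ioi 0)) (nhds (Complex.exp (L * a))) := by
    intro S L hlog hmem
    have hbS : Tendsto b (nhdsWithin 0 (Set.Ioi 0)) (nhdsWithin zj S) := by
      rw [tendsto_nhdsWithin_iff]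
      exact ⟨hb, eventually_mem_nhdsWithin.mono hmem⟩
    have hfin : Tendsto (fun ε : ℝ => Complex.exp (Complex.log (b ε) * a))
        (nhdsWithin 0 (Set.Ioi 0)) (nhds (Complex.exp (L * a))) :=
      (Complex.continuous_exp.tendsto _).comp ((hlog.comp hbS).mul_const a)
    refine Tendsto.congr' ?_ hfin
    exact eventually_mem_nhdsWithin.mono fun ε hε => (Complex.cpow_def_of_ne_zero (hbne ε hε) a).symm
  rcases hs with rfl | rfl
  · have h := key {z : ℂ | 0 ≤ z.im} _
      (Complex.tendsto_log_nhdsWithin_im_nonneg_of_re_neg_of_im_zero hzjre hzjim)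
      (fun ε hε => by
        rw [Set.mem_setOf_eq, himeq]
        have hε' : (0:ℝ) < ε := hε
        exact div_nonneg (by nlinarith) (hQpos ε).le)
    convert h using 3
    push_cast; ring
  · have h := key {z : ℂ | z.im < 0} _
      (Complex.tendsto_log_nhdsWithin_im_neg_of_re_neg_of_im_zero hzjre hzjim)
      (fun ε hε => by
        rw [Set.mem_setOf_eq, himeq]
        have hε' : (0:ℝ) < ε := hε
        apply div_neg_of_neg_of_pos (by nlinarith) (hQpos ε))
    convert h using 3
    push_cast; ring

set_option maxHeartbeats 1000000

/-- The global parametrix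
P^{(∞)}(z) = ∏_{k} ((z−r_{k+1})/(z−r_k))^{−ln(1−γ_k)σ₃/(2πi)} z^{−βσ₃} (a diagonal matrix)
satisfies the jump P^{(∞)}_+(x) = P^{(∞)}_−(x) diag((1−γ_j)⁻¹, 1−γ_j) on (r_j, r_{j+1})
with r_j > 0. -/
theorem global_parametrix_jump (n m : ℕ) (hn : 1 ≤ n) (hmn : m ≤ n)
    (r : ℕ → ℝ) (hr : ∀ k < n, r k < r (k + 1)) (hrm : r m = 0)
    (γ : ℕ → ℝ) (hγ : ∀ k < n, 0 ≤ γ k ∧ γ k < 1)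
    (β : ℂ) (hβ : β.re = 0)
    (Pinf : ℂ → Matrix (Fin 2) (Fin 2) ℂ)
    (hP : ∀ z : ℂ, Pinf z = Matrix.diagonal
      ![(∏ k ∈ Finset.range n,
            ((z - (r (k + 1) : ℂ)) / (z - (r k : ℂ))) ^
              (-(Real.log (1 - γ k) : ℂ) / (2 * Real.pi * Complex.I))) * branchPow z (-β),
        (∏ k ∈ Finset.range n,
            ((z - (r (k + 1) : ℂ)) / (z - (r k : ℂ))) ^
              ((Real.log (1 - γ k) : ℂ) / (2 * Real.pi * Complex.I))) * branchPow z β])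
    (j : ℕ) (hj : j < n) (hrj : 0 < r j)
    (x : ℝ) (hx : x ∈ Set.Ioo (r j) (r (j + 1))) :
    ∃ Pp Pm : Matrix (Fin 2) (Fin 2) ℂ,
      Tendsto (fun ε : ℝ => Pinf ((x : ℂ) + ε * Complex.I))
        (nhdsWithin 0 (Set.Ioi 0)) (nhds Pp) ∧
      Tendsto (fun ε : ℝ => Pinf ((x : ℂ) - ε * Complex.I))
        (nhdsWithin 0 (Set.Ioi 0)) (nhds Pm) ∧
      Pp = Pm * Matrix.diagonal ![((1 - γ j : ℝ) : ℂ)⁻¹, ((1 - γ j : ℝ) : ℂ)] := by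
  obtain ⟨hx1, hx2⟩ := hx
  have hx0 : 0 < x := lt_trans hrj hx1
  have hmono : ∀ a b : ℕ, a ≤ b → b ≤ n → r a ≤ r b := by
    intro a b hab hbn
    obtain ⟨d, rfl⟩ := Nat.exists_eq_add_of_le hab
    clear hab
    induction d with
    | zero => simp
    | succ d ih =>
      have h1 : a + d < n := by omega
      calc r a ≤ r (a + d) := ih (by omega)
        _ ≤ r (a + d + 1) := (hr _ h1).le
  have hbase : ∀ k, k < n → k ≠ j → 0 < (x - r (k+1)) / (x - r k) := by
    intro k hk hkj
    rcases lt_or_gt_of_ne hkj with h | h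
    · have h1 : r (k+1) ≤ r j := hmono (k+1) j h hj.le
      have h2 : r k < r (k+1) := hr k hk
      exact div_pos (by linarith) (by linarith)
    · have h1 : r (j+1) ≤ r k := hmono (j+1) k h hk.le
      have h2 : r k < r (k+1) := hr k hk
      exact div_pos_of_neg_of_neg (by linarith) (by linarith)
  -- entrywise limit
  have hentry : ∀ (a : ℕ → ℂ) (c : ℂ) (s : ℝ), s = 1 ∨ s = -1 →
      Tendsto (fun ε : ℝ =>
          (∏ k ∈ Finset.range n,
            (((x:ℂ) + (s:ℂ)*ε*Complex.I - r (k+1)) / ((x:ℂ) + (s:ℂ)*ε*Complex.I - r k)) ^ a k)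
          * branchPow ((x:ℂ) + (s:ℂ)*ε*Complex.I) c)
        (nhdsWithin 0 (Set.Ioi 0))
        (nhds ((∏ k ∈ Finset.range n,
            if k = j then
              Complex.exp ((Real.log (‖((x:ℂ) - r (j+1)) / ((x:ℂ) - r j)‖)
                + (s:ℂ) * (Real.pi * Complex.I)) * a k)
            else (((x:ℂ) - r (k+1)) / ((x:ℂ) - r k)) ^ a k)
          * branchPow (x:ℂ) c)) := by
    intro a c s hs
    refine Tendsto.mul (tendsto_finset_prod _ fun k hk => ?_) (branchPow_tendsto x hx0 c s)
    simp only [Finset.mem_range] at hk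
    by_cases hkj : k = j
    · subst hkj
      rw [if_pos rfl]
      exact factor_jump x (r k) (r (k+1)) hx2 hx1 (a k) s hs
    · rw [if_neg hkj]
      exact factor_cont x (r k) (r (k+1)) (hbase k hk hkj) (a k) s
  set L : ℝ := Real.log (‖((x:ℂ) - r (j+1)) / ((x:ℂ) - r j)‖) with hL
  set a0 : ℕ → ℂ := fun k => -(Real.log (1 - γ k) : ℂ) / (2 * Real.pi * Complex.I) with ha0
  set a1 : ℕ → ℂ := fun k => (Real.log (1 - γ k) : ℂ) / (2 * Real.pi * Complex.I) with ha1
  have hpath1 : ∀ ε : ℝ, (x:ℂ) + ((1:ℝ):ℂ)*ε*Complex.I = (x:ℂ) + ε*Complex.I := by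
    intro ε; push_cast; ring
  have hpathm : ∀ ε : ℝ, (x:ℂ) + ((-1:ℝ):ℂ)*ε*Complex.I = (x:ℂ) - ε*Complex.I := by
    intro ε; push_cast; ring
  -- the limit values
  refine ⟨Matrix.diagonal
      ![(∏ k ∈ Finset.range n, if k = j then
            Complex.exp ((Real.log (‖((x:ℂ) - r (j+1)) / ((x:ℂ) - r j)‖)
              + ((1:ℝ):ℂ) * (Real.pi * Complex.I)) * a0 k)
          else (((x:ℂ) - r (k+1)) / ((x:ℂ) - r k)) ^ a0 k) * branchPow (x:ℂ) (-β),
        (∏ k ∈ Finset.range n, if k = j then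
            Complex.exp ((Real.log (‖((x:ℂ) - r (j+1)) / ((x:ℂ) - r j)‖)
              + ((1:ℝ):ℂ) * (Real.pi * Complex.I)) * a1 k)
          else (((x:ℂ) - r (k+1)) / ((x:ℂ) - r k)) ^ a1 k) * branchPow (x:ℂ) β],
    Matrix.diagonal
      ![(∏ k ∈ Finset.range n, if k = j then
            Complex.exp ((Real.log (‖((x:ℂ) - r (j+1)) / ((x:ℂ) - r j)‖)
              + ((-1:ℝ):ℂ) * (Real.pi * Complex.I)) * a0 k)
          else (((x:ℂ) - r (k+1)) / ((x:ℂ) - r k)) ^ a0 k) * branchPow (x:ℂ) (-β),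
        (∏ k ∈ Finset.range n, if k = j then
            Complex.exp ((Real.log (‖((x:ℂ) - r (j+1)) / ((x:ℂ) - r j)‖)
              + ((-1:ℝ):ℂ) * (Real.pi * Complex.I)) * a1 k)
          else (((x:ℂ) - r (k+1)) / ((x:ℂ) - r k)) ^ a1 k) * branchPow (x:ℂ) β],
    ?_, ?_, ?_⟩
  · simp only [hP]
    refine tendsto_diag2 ?_ ?_
    · exact (hentry a0 (-β) 1 (Or.inl rfl)).congr (fun ε => by rw [hpath1 ε])
    · exact (hentry a1 β 1 (Or.inl rfl)).congr (fun ε => by rw [hpath1 ε])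
  · simp only [hP]
    refine tendsto_diag2 ?_ ?_
    · exact (hentry a0 (-β) (-1) (Or.inr rfl)).congr (fun ε => by rw [hpathm ε])
    · exact (hentry a1 β (-1) (Or.inr rfl)).congr (fun ε => by rw [hpathm ε])
  · -- the jump relation
    have hγj : (0:ℝ) < 1 - γ j := by have := hγ j hj; linarith
    have h2pi : (2 * (Real.pi:ℂ) * Complex.I) ≠ 0 := by
      simp [Real.pi_ne_zero, Complex.I_ne_zero]
    have hexp0 : Complex.exp (2 * (Real.pi:ℂ) * Complex.I * a0 j) = (((1 - γ j : ℝ)):ℂ)⁻¹ := by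
      have h1 : 2 * (Real.pi:ℂ) * Complex.I * a0 j = ((-(Real.log (1 - γ j)) : ℝ) : ℂ) := by
        rw [ha0]
        push_cast
        field_simp
      rw [h1, ← Complex.ofReal_exp, Real.exp_neg, Real.exp_log hγj, Complex.ofReal_inv]
    have hexp1 : Complex.exp (2 * (Real.pi:ℂ) * Complex.I * a1 j) = (((1 - γ j : ℝ)):ℂ) := by
      have h1 : 2 * (Real.pi:ℂ) * Complex.I * a1 j = (((Real.log (1 - γ j)) : ℝ) : ℂ) := by
        rw [ha1]
        push_cast
        field_simp
      rw [h1, ← Complex.ofReal_exp, Real.exp_log hγj]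
    have hsplit : ∀ (a : ℕ → ℂ) (s : ℝ),
        (∏ k ∈ Finset.range n, if k = j then
            Complex.exp ((Real.log (‖((x:ℂ) - r (j+1)) / ((x:ℂ) - r j)‖)
              + ((s:ℝ):ℂ) * (Real.pi * Complex.I)) * a k)
          else (((x:ℂ) - r (k+1)) / ((x:ℂ) - r k)) ^ a k)
        = Complex.exp ((Real.log (‖((x:ℂ) - r (j+1)) / ((x:ℂ) - r j)‖)
              + ((s:ℝ):ℂ) * (Real.pi * Complex.I)) * a j)
          * ∏ k ∈ (Finset.range n).erase j, (((x:ℂ) - r (k+1)) / ((x:ℂ) - r k)) ^ a k := by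
      intro a s
      rw [← Finset.mul_prod_erase _ _ (Finset.mem_range.mpr hj), if_pos rfl]
      congr 1
      exact Finset.prod_congr rfl fun k hk => if_neg (Finset.ne_of_mem_erase hk)
    have hjump : ∀ (a : ℕ → ℂ),
        Complex.exp ((Real.log (‖((x:ℂ) - r (j+1)) / ((x:ℂ) - r j)‖)
            + ((1:ℝ):ℂ) * (Real.pi * Complex.I)) * a j)
        = Complex.exp ((Real.log (‖((x:ℂ) - r (j+1)) / ((x:ℂ) - r j)‖)
            + ((-1:ℝ):ℂ) * (Real.pi * Complex.I)) * a j)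
          * Complex.exp (2 * (Real.pi:ℂ) * Complex.I * a j) := by
      intro a
      rw [← Complex.exp_add]
      congr 1
      push_cast
      ring
    rw [Matrix.diagonal_mul_diagonal]
    apply congrArg Matrix.diagonal
    funext i
    fin_cases i
    · simp only [Fin.zero_eta, Fin.isValue, Pi.mul_apply, Matrix.cons_val_zero]
      rw [hsplit a0 1, hsplit a0 (-1), hjump a0, hexp0]
      ring
    · simp only [Fin.mk_one, Fin.isValue, Pi.mul_apply, Matrix.cons_val_one, Matrix.head_cons, Matrix.cons_val_zero]
      rw [hsplit a1 1, hsplit a1 (-1), hjump a1, hexp1]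
      ring
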